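/- Let α ∈ (0,1) and let Ψ : ℝⁿ → ℝⁿ be the rigid motion Ψ(X) = c + QX where Q is an orthogonal matrix and c ∈ ℝⁿ. Then the fractional deformation gradient tensor F̃ with entries F̃_{ij} = (1/2)Γ(2-α)[ L_{A_j}^{α-1}·(1/Γ(1-α))∫_{X_{A_j}}^{X_j} ∂_j Ψ_i (X_j − R_j)^{-α} dR_j + L_{B_j}^{α-1}·(1/Γ(1-α))∫_{X_j}^{X_{B_j}} ∂_j Ψ_i (R_j − X_j)^{-α} dR_j ] (with L_{A_j} = X_j − X_{A_j}, L_{B_j} = X_{B_j} − X_j) satisfies F̃ = Q, and hence F̃ᵀF̃ = I. -/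

import Mathlib

open MeasureTheory intervalIntegral Set Matrix

/-- Fractional deformation gradient: the `(i,j)` entry is the Riesz–Caputo
fractional derivative of order `α` of the `i`-th component of `Ψ` along the
`j`-th coordinate direction, over the horizon `(XA j, XB j)` with length
scales `L_{A_j} = X j - XA j`, `L_{B_j} = XB j - X j`. -/
noncomputable def fracDefGrad (n : ℕ) (α : ℝ) (Ψ : (Fin n → ℝ) → (Fin n → ℝ))
    (X XA XB : Fin n → ℝ) : Matrix (Fin n) (Fin n) ℝ :=
  fun i j =>
    (1 / 2) * Real.Gamma (2 - α) *
      ((X j - XA j) ^ (α - 1) * ((1 / Real.Gamma (1 - α)) *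
          ∫ r in XA j..(X j), deriv (fun t => Ψ (Function.update X j t) i) r / (X j - r) ^ α) +
       (XB j - X j) ^ (α - 1) * ((1 / Real.Gamma (1 - α)) *
          ∫ r in (X j)..(XB j), deriv (fun t => Ψ (Function.update X j t) i) r / (r - X j) ^ α))

theorem fracDefGrad_rigid_motion (n : ℕ) (α : ℝ) (hα : α ∈ Set.Ioo (0 : ℝ) 1)
    (c : Fin n → ℝ) (Q : Matrix (Fin n) (Fin n) ℝ) (hQ : Qᵀ * Q = 1)
    (Ψ : (Fin n → ℝ) → (Fin n → ℝ)) (hΨ : ∀ X, Ψ X = c + Q.mulVec X)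
    (X XA XB : Fin n → ℝ) (hhor : ∀ j, XA j < X j ∧ X j < XB j) :
    fracDefGrad n α Ψ X XA XB = Q ∧
      (fracDefGrad n α Ψ X XA XB)ᵀ * fracDefGrad n α Ψ X XA XB = 1 := by
  obtain ⟨hα0, hα1⟩ := hα
  have h1α : (0:ℝ) < 1 - α := by linarith
  have hkey : fracDefGrad n α Ψ X XA XB = Q := by
    ext i j
    obtain ⟨hA, hB⟩ := hhor j
    have hLA0 : 0 < X j - XA j := by linarith
    have hLB0 : 0 < XB j - X j := by linarith
    have hd : ∀ r : ℝ, deriv (fun t => Ψ (Function.update X j t) i) r = Q i j := by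
      intro r
      have hfun : (fun t => Ψ (Function.update X j t) i) =
          fun t => Q i j * t + (c i + ∑ k ∈ Finset.univ.erase j, Q i k * X k) := by
        funext t
        rw [hΨ]
        simp only [Pi.add_apply, Matrix.mulVec, dotProduct]
        rw [← Finset.add_sum_erase _ (fun k => Q i k * Function.update X j t k)
          (Finset.mem_univ j), Function.update_self]
        rw [Finset.sum_congr rfl (fun k hk => by
          rw [Function.update_of_ne (Finset.mem_erase.mp hk).1])]
        ring
      rw [hfun]
      have h := (((hasDerivAt_id r).const_mul (Q i j)).add_const
        (c i + ∑ k ∈ Finset.univ.erase j, Q i k * X k)).deriv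
      simpa using h
    have hI1 : (∫ r in XA j..(X j),
        deriv (fun t => Ψ (Function.update X j t) i) r / (X j - r) ^ α)
        = Q i j * ((X j - XA j) ^ (1 - α) / (1 - α)) := by
      have heq1 : ∀ r : ℝ, deriv (fun t => Ψ (Function.update X j t) i) r / (X j - r) ^ α
          = Q i j * ((X j - r) ^ α)⁻¹ := fun r => by rw [hd r, div_eq_mul_inv]
      simp_rw [heq1]
      rw [intervalIntegral.integral_const_mul]
      congr 1
      rw [intervalIntegral.integral_comp_sub_left (fun u : ℝ => (u ^ α)⁻¹) (X j), sub_self]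
      have heq : EqOn (fun u : ℝ => (u ^ α)⁻¹) (fun u : ℝ => u ^ (-α))
          (Set.uIcc 0 (X j - XA j)) := by
        intro u hu
        rw [Set.uIcc_of_le hLA0.le] at hu
        simp only
        rw [Real.rpow_neg hu.1]
      rw [intervalIntegral.integral_congr heq,
        integral_rpow (Or.inl (by linarith : (-1:ℝ) < -α)),
        Real.zero_rpow (by linarith : -α + 1 ≠ 0)]
      rw [sub_zero, show (-α + 1 : ℝ) = 1 - α by ring]
    have hI2 : (∫ r in (X j)..(XB j),
        deriv (fun t => Ψ (Function.update X j t) i) r / (r - X j) ^ α)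
        = Q i j * ((XB j - X j) ^ (1 - α) / (1 - α)) := by
      have heq1 : ∀ r : ℝ, deriv (fun t => Ψ (Function.update X j t) i) r / (r - X j) ^ α
          = Q i j * ((r - X j) ^ α)⁻¹ := fun r => by rw [hd r, div_eq_mul_inv]
      simp_rw [heq1]
      rw [intervalIntegral.integral_const_mul]
      congr 1
      rw [intervalIntegral.integral_comp_sub_right (fun u : ℝ => (u ^ α)⁻¹) (X j), sub_self]
      have heq : EqOn (fun u : ℝ => (u ^ α)⁻¹) (fun u : ℝ => u ^ (-α))
          (Set.uIcc 0 (XB j - X j)) := by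
        intro u hu
        rw [Set.uIcc_of_le hLB0.le] at hu
        simp only
        rw [Real.rpow_neg hu.1]
      rw [intervalIntegral.integral_congr heq,
        integral_rpow (Or.inl (by linarith : (-1:ℝ) < -α)),
        Real.zero_rpow (by linarith : -α + 1 ≠ 0)]
      rw [sub_zero, show (-α + 1 : ℝ) = 1 - α by ring]
    have hG : Real.Gamma (2 - α) = (1 - α) * Real.Gamma (1 - α) := by
      rw [show (2:ℝ) - α = (1 - α) + 1 by ring,
        Real.Gamma_add_one (by linarith : (1:ℝ) - α ≠ 0)]
    have hGpos : 0 < Real.Gamma (1 - α) := Real.Gamma_pos_of_pos h1α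
    have hpowA : (X j - XA j) ^ (α - 1) * (X j - XA j) ^ (1 - α) = 1 := by
      rw [← Real.rpow_add hLA0]; norm_num
    have hpowB : (XB j - X j) ^ (α - 1) * (XB j - X j) ^ (1 - α) = 1 := by
      rw [← Real.rpow_add hLB0]; norm_num
    simp only [fracDefGrad, hI1, hI2, hG]
    field_simp
    linear_combination (Q i j) * hpowA +
      (Q i j) * hpowB
  exact ⟨hkey, by rw [hkey]; exact hQ⟩
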